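/- (Theorem 2(ii)) For nonnegative reals S²_{[k]1}, S²_{[k]0} with S²_{[k]1}+S²_{[k]0}>0 and for every e_{[k]1}∈(0,1) with e_{[k]0}=1−e_{[k]1}: e_{[k]1}^{-1}S²_{[k]1} + e_{[k]0}^{-1}S²_{[k]0} ≥ (√(S²_{[k]1}) + √(S²_{[k]0}))², with equality if and only if e_{[k]1} = √(S²_{[k]1})/(√(S²_{[k]1})+√(S²_{[k]0})). Consequently, for given stratum sampling proportions f_{[k]}, the asymptotic variance V_{ττ} = Σ_k (fΠ_{[k]}/f_{[k]})(e_{[k]1}^{-1}S²_{[k]1}+e_{[k]0}^{-1}S²_{[k]0}) − fΣ_kΠ_{[k]}S²_{[k]τ} of the stratified difference-in-means estimator is minimized over the treated proportions (e_{[k]1})_{k=1}^K ∈ (0,1)^K exactly at e_{[k]1} = √(S²_{[k]1})/(√(S²_{[k]1})+√(S²_{[k]0})) for every k. -/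

import Mathlib

open MeasureTheory ProbabilityTheory Filter Matrix
open scoped ENNReal NNReal

noncomputable section

namespace SurveyExperiments

/-- The uniform probability measure on a finite set of outcomes. -/
def unif {α : Type*} [MeasurableSpace α] (s : Finset α) : Measure α :=
  (s.card : ℝ≥0∞)⁻¹ • ∑ a ∈ s, MeasureTheory.Measure.dirac a

/-- The covariance of two real-valued random variables. -/
def covRV {Ω : Type*} [MeasurableSpace Ω] (μ : Measure Ω) (f g : Ω → ℝ) : ℝ :=
  ∫ ω, (f ω - ∫ x, f x ∂μ) * (g ω - ∫ x, g x ∂μ) ∂μ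

/-- The total variation distance between two measures. -/
def dTV {α : Type*} [MeasurableSpace α] (P Q : Measure α) : ℝ :=
  ⨆ A : Set α, |(P A).toReal - (Q A).toReal|

/-- The standard Gaussian measure on `ℝ^J`. -/
def stdGaussianPi (J : ℕ) : Measure (Fin J → ℝ) := Measure.pi fun _ => gaussianReal 0 1

/-- The law `L_{J,a}` of the first coordinate of a standard Gaussian vector in `ℝ^J`
conditioned on the event that its squared norm is at most `a`. -/
def truncGaussian (J : ℕ) [NeZero J] (a : ℝ) : Measure ℝ :=
  Measure.map (fun x => x 0)
    (ProbabilityTheory.cond (stdGaussianPi J) {x | ∑ i, (x i) ^ 2 ≤ a})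

/-- `ν_{J,a}`, the variance of the truncated Gaussian `L_{J,a}`. -/
def nu (J : ℕ) [NeZero J] (a : ℝ) : ℝ := variance id (truncGaussian J a)

/-- The law of `√v (√(1-rW-rX) ε + √rW L_{J1,aS} + √rX L_{J2,aT})` with independent
`ε ~ N(0,1)`, `L_{J1,aS}`, `L_{J2,aT}`. -/
def rrLimitLaw (v rW rX : ℝ) (J1 J2 : ℕ) [NeZero J1] [NeZero J2] (aS aT : ℝ) : Measure ℝ :=
  Measure.map
    (fun p : ℝ × ℝ × ℝ =>
      Real.sqrt v * (Real.sqrt (1 - rW - rX) * p.1 + Real.sqrt rW * p.2.1 + Real.sqrt rX * p.2.2))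
    ((gaussianReal 0 1).prod ((truncGaussian J1 aS).prod (truncGaussian J2 aT)))

/-- The `p`-th quantile of a measure on `ℝ`. -/
def quantile (μ : Measure ℝ) (p : ℝ) : ℝ := sInf {x : ℝ | ENNReal.ofReal p ≤ μ (Set.Iic x)}

/-- The data of a stratified (randomized survey) experiment: a population of `N` units
partitioned into `K` strata by `st`, with `nk k` units sampled and `nk1 k` sampled units
treated in stratum `k`. -/
structure SRSE where
  K : ℕ
  N : ℕ
  st : Fin N → Fin K
  nk : Fin K → ℕ
  nk1 : Fin K → ℕ

namespace SRSE

variable (E : SRSE)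

def stratum (k : Fin E.K) : Finset (Fin E.N) := Finset.univ.filter fun i => E.st i = k
def Nk (k : Fin E.K) : ℕ := (E.stratum k).card
def nk0 (k : Fin E.K) : ℕ := E.nk k - E.nk1 k
def n : ℕ := ∑ k, E.nk k
def Pi (k : Fin E.K) : ℝ := (E.Nk k : ℝ) / (E.N : ℝ)
def pik (k : Fin E.K) : ℝ := (E.nk k : ℝ) / (E.n : ℝ)
def fk (k : Fin E.K) : ℝ := (E.nk k : ℝ) / (E.Nk k : ℝ)
def f : ℝ := (E.n : ℝ) / (E.N : ℝ)
def e1 (k : Fin E.K) : ℝ := (E.nk1 k : ℝ) / (E.nk k : ℝ)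
def e0 (k : Fin E.K) : ℝ := (E.nk0 k : ℝ) / (E.nk k : ℝ)

/-- Sample space: a pair of sampling indicators and treatment indicators. -/
abbrev Omega := (Fin E.N → Bool) × (Fin E.N → Bool)

/-- The attainable pairs of indicators: `nk k` sampled and `nk1 k` treated units in each
stratum `k`, with treated units sampled. -/
def valid : Finset E.Omega :=
  Finset.univ.filter fun ω =>
    (∀ k, ((E.stratum k).filter fun i => ω.1 i = true).card = E.nk k) ∧
    (∀ k, ((E.stratum k).filter fun i => ω.1 i = true ∧ ω.2 i = true).card = E.nk1 k) ∧
    (∀ i, ω.2 i = true → ω.1 i = true)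

/-- The stratified randomized survey experiment (SRSE) design: stratified random sampling
without replacement followed by stratified randomization, i.e. the uniform distribution over
all attainable pairs of indicator vectors. -/
def P : Measure E.Omega := unif E.valid

def Z (ω : E.Omega) (i : Fin E.N) : ℝ := if ω.1 i then 1 else 0
def T (ω : E.Omega) (i : Fin E.N) : ℝ := if ω.2 i then 1 else 0

def meanK (a : Fin E.N → ℝ) (k : Fin E.K) : ℝ := (∑ i ∈ E.stratum k, a i) / (E.Nk k : ℝ)
def covK (a b : Fin E.N → ℝ) (k : Fin E.K) : ℝ :=
  (∑ i ∈ E.stratum k, (a i - E.meanK a k) * (b i - E.meanK b k)) / ((E.Nk k : ℝ) - 1)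
def meanAll (a : Fin E.N → ℝ) : ℝ := (∑ i, a i) / (E.N : ℝ)
def varAll (a : Fin E.N → ℝ) : ℝ := (∑ i, (a i - E.meanAll a) ^ 2) / ((E.N : ℝ) - 1)

def mean1 (a : Fin E.N → ℝ) (k : Fin E.K) (ω : E.Omega) : ℝ :=
  (∑ i ∈ E.stratum k, E.Z ω i * E.T ω i * a i) / (E.nk1 k : ℝ)
def mean0 (a : Fin E.N → ℝ) (k : Fin E.K) (ω : E.Omega) : ℝ :=
  (∑ i ∈ E.stratum k, E.Z ω i * (1 - E.T ω i) * a i) / (E.nk0 k : ℝ)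
def meanS (a : Fin E.N → ℝ) (k : Fin E.K) (ω : E.Omega) : ℝ :=
  (∑ i ∈ E.stratum k, E.Z ω i * a i) / (E.nk k : ℝ)

/-- The stratified difference-in-means estimator. -/
def hatTau (Y1 Y0 : Fin E.N → ℝ) (ω : E.Omega) : ℝ :=
  ∑ k, E.Pi k * (E.mean1 Y1 k ω - E.mean0 Y0 k ω)
/-- The finite-population average treatment effect. -/
def tau (Y1 Y0 : Fin E.N → ℝ) : ℝ := ∑ k, E.Pi k * (E.meanK Y1 k - E.meanK Y0 k)
/-- The treated/control covariate-mean-difference `τ̂_X`. -/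
def hatTauX {J : ℕ} (X : Fin E.N → Fin J → ℝ) (ω : E.Omega) : Fin J → ℝ := fun j =>
  ∑ k, E.Pi k * (E.mean1 (fun i => X i j) k ω - E.mean0 (fun i => X i j) k ω)
/-- The sampled/population covariate-mean-difference `δ̂_W`. -/
def hatDeltaW {J : ℕ} (W : Fin E.N → Fin J → ℝ) (ω : E.Omega) : Fin J → ℝ := fun j =>
  ∑ k, E.Pi k * (E.meanS (fun i => W i j) k ω - E.meanK (fun i => W i j) k)

def sCov1 (a b : Fin E.N → ℝ) (k : Fin E.K) (ω : E.Omega) : ℝ :=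
  (∑ i ∈ E.stratum k, E.Z ω i * E.T ω i * (a i - E.mean1 a k ω) * (b i - E.mean1 b k ω)) /
    ((E.nk1 k : ℝ) - 1)
def sCov0 (a b : Fin E.N → ℝ) (k : Fin E.K) (ω : E.Omega) : ℝ :=
  (∑ i ∈ E.stratum k, E.Z ω i * (1 - E.T ω i) * (a i - E.mean0 a k ω) * (b i - E.mean0 b k ω)) /
    ((E.nk0 k : ℝ) - 1)
def sCovS (a b : Fin E.N → ℝ) (k : Fin E.K) (ω : E.Omega) : ℝ :=
  (∑ i ∈ E.stratum k, E.Z ω i * (a i - E.meanS a k ω) * (b i - E.meanS b k ω)) /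
    ((E.nk k : ℝ) - 1)

/-- The `(τ,τ)` entry of the covariance matrix `V`. -/
def Vtt (Y1 Y0 : Fin E.N → ℝ) : ℝ :=
  ∑ k, (E.Pi k) ^ 2 / E.pik k *
    (E.covK Y1 Y1 k / E.e1 k + E.covK Y0 Y0 k / E.e0 k -
      E.fk k * E.covK (fun i => Y1 i - Y0 i) (fun i => Y1 i - Y0 i) k)
/-- The `(τ,X)` block of `V`. -/
def VtX {J : ℕ} (Y1 Y0 : Fin E.N → ℝ) (X : Fin E.N → Fin J → ℝ) : Fin J → ℝ := fun j =>
  ∑ k, (E.Pi k) ^ 2 / E.pik k *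
    (E.covK (fun i => X i j) Y1 k / E.e1 k + E.covK (fun i => X i j) Y0 k / E.e0 k)
/-- The `(τ,W)` block of `V`. -/
def VtW {J : ℕ} (Y1 Y0 : Fin E.N → ℝ) (W : Fin E.N → Fin J → ℝ) : Fin J → ℝ := fun j =>
  ∑ k, (E.Pi k) ^ 2 / E.pik k *
    ((1 - E.fk k) * E.covK (fun i => W i j) (fun i => Y1 i - Y0 i) k)
/-- The `(X,X)` block of `V`. -/
def VXX {J : ℕ} (X : Fin E.N → Fin J → ℝ) : Matrix (Fin J) (Fin J) ℝ :=
  Matrix.of fun j j' =>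
    ∑ k, (E.Pi k) ^ 2 / E.pik k *
      (E.covK (fun i => X i j) (fun i => X i j') k / (E.e1 k * E.e0 k))
/-- The `(W,W)` block of `V`. -/
def VWW {J : ℕ} (W : Fin E.N → Fin J → ℝ) : Matrix (Fin J) (Fin J) ℝ :=
  Matrix.of fun j j' =>
    ∑ k, (E.Pi k) ^ 2 / E.pik k *
      ((1 - E.fk k) * E.covK (fun i => W i j) (fun i => W i j') k)

/-- The covariance matrix of `δ̂_W` under stratified random sampling. -/
def covWSampling {J : ℕ} (W : Fin E.N → Fin J → ℝ) : Matrix (Fin J) (Fin J) ℝ :=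
  Matrix.of fun j j' =>
    ∑ k, (E.Pi k) ^ 2 * ((E.nk k : ℝ)⁻¹ - (E.Nk k : ℝ)⁻¹) *
      E.covK (fun i => W i j) (fun i => W i j') k
/-- The Mahalanobis sampling-balance criterion `M_S`. -/
def MS {J : ℕ} (W : Fin E.N → Fin J → ℝ) (ω : E.Omega) : ℝ :=
  E.hatDeltaW W ω ⬝ᵥ ((E.covWSampling W)⁻¹ *ᵥ E.hatDeltaW W ω)
/-- The conditional covariance matrix of `τ̂_X` given the sample. -/
def covXAssign {J : ℕ} (X : Fin E.N → Fin J → ℝ) (ω : E.Omega) : Matrix (Fin J) (Fin J) ℝ :=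
  Matrix.of fun j j' =>
    ∑ k, (E.Pi k) ^ 2 * ((E.nk k : ℝ) / ((E.nk1 k : ℝ) * (E.nk0 k : ℝ))) *
      E.sCovS (fun i => X i j) (fun i => X i j') k ω
/-- The Mahalanobis assignment-balance criterion `M_T`. -/
def MT {J : ℕ} (X : Fin E.N → Fin J → ℝ) (ω : E.Omega) : ℝ :=
  E.hatTauX X ω ⬝ᵥ ((E.covXAssign X ω)⁻¹ *ᵥ E.hatTauX X ω)
/-- The acceptance event `{M_S ≤ a_S, M_T ≤ a_T}`. -/
def accept {J1 J2 : ℕ} (W : Fin E.N → Fin J1 → ℝ) (X : Fin E.N → Fin J2 → ℝ) (aS aT : ℝ) :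
    Set E.Omega := {ω | E.MS W ω ≤ aS ∧ E.MT X ω ≤ aT}

/-- The SRSRR design: the SRSE design conditioned on acceptance of both balance criteria. -/
def Prr {J1 J2 : ℕ} (W : Fin E.N → Fin J1 → ℝ) (X : Fin E.N → Fin J2 → ℝ) (aS aT : ℝ) :
    Measure E.Omega := ProbabilityTheory.cond E.P (E.accept W X aS aT)

/-- The conservative variance estimator `V̂_ττ`. -/
def hatVtt (Y1 Y0 : Fin E.N → ℝ) (ω : E.Omega) : ℝ :=
  ∑ k, (E.Pi k) ^ 2 / E.pik k * (E.sCov1 Y1 Y1 k ω / E.e1 k + E.sCov0 Y0 Y0 k ω / E.e0 k)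
/-- The estimator `V̂_τX`. -/
def hatVtX {J : ℕ} (Y1 Y0 : Fin E.N → ℝ) (X : Fin E.N → Fin J → ℝ) (ω : E.Omega) : Fin J → ℝ :=
  fun j => ∑ k, (E.Pi k) ^ 2 / E.pik k *
    (E.sCov1 (fun i => X i j) Y1 k ω / E.e1 k + E.sCov0 (fun i => X i j) Y0 k ω / E.e0 k)
/-- The estimator `V̂_τW`. -/
def hatVtW {J : ℕ} (Y1 Y0 : Fin E.N → ℝ) (W : Fin E.N → Fin J → ℝ) (ω : E.Omega) : Fin J → ℝ :=
  fun j => ∑ k, (E.Pi k) ^ 2 / E.pik k *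
    ((1 - E.fk k) * (E.sCov1 (fun i => W i j) Y1 k ω - E.sCov0 (fun i => W i j) Y0 k ω))
/-- The estimator `V̂_XX`. -/
def hatVXX {J : ℕ} (X : Fin E.N → Fin J → ℝ) (ω : E.Omega) : Matrix (Fin J) (Fin J) ℝ :=
  Matrix.of fun j j' => ∑ k, (E.Pi k) ^ 2 / E.pik k *
    (E.sCovS (fun i => X i j) (fun i => X i j') k ω / (E.e1 k * E.e0 k))
/-- The plug-in estimator `R̂²_W` (also used for `R̂²_E` with analysis-stage covariates). -/
def hatRW2 {J : ℕ} (Y1 Y0 : Fin E.N → ℝ) (W : Fin E.N → Fin J → ℝ) (ω : E.Omega) : ℝ :=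
  (E.hatVtW Y1 Y0 W ω ⬝ᵥ ((E.VWW W)⁻¹ *ᵥ E.hatVtW Y1 Y0 W ω)) / E.hatVtt Y1 Y0 ω
/-- The plug-in estimator `R̂²_X` (also used for `R̂²_C` with analysis-stage covariates). -/
def hatRX2 {J : ℕ} (Y1 Y0 : Fin E.N → ℝ) (X : Fin E.N → Fin J → ℝ) (ω : E.Omega) : ℝ :=
  (E.hatVtX Y1 Y0 X ω ⬝ᵥ ((E.hatVXX X ω)⁻¹ *ᵥ E.hatVtX Y1 Y0 X ω)) / E.hatVtt Y1 Y0 ω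

/-- The estimated regression-adjustment coefficient `β̂`. -/
def hatBeta {J : ℕ} (Y1 Y0 : Fin E.N → ℝ) (C : Fin E.N → Fin J → ℝ) (ω : E.Omega) : Fin J → ℝ :=
  (E.hatVXX C ω)⁻¹ *ᵥ E.hatVtX Y1 Y0 C ω
/-- The estimated regression-adjustment coefficient `γ̂`. -/
def hatGamma {J : ℕ} (Y1 Y0 : Fin E.N → ℝ) (Ecov : Fin E.N → Fin J → ℝ) (ω : E.Omega) :
    Fin J → ℝ :=
  (E.VWW Ecov)⁻¹ *ᵥ E.hatVtW Y1 Y0 Ecov ω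
/-- The regression-adjusted estimator `τ̂_adj = τ̂ - β̂ᵀτ̂_C - γ̂ᵀδ̂_E`. -/
def hatTauAdj {J3 J4 : ℕ} (Y1 Y0 : Fin E.N → ℝ) (C : Fin E.N → Fin J4 → ℝ)
    (Ecov : Fin E.N → Fin J3 → ℝ) (ω : E.Omega) : ℝ :=
  E.hatTau Y1 Y0 ω - E.hatBeta Y1 Y0 C ω ⬝ᵥ E.hatTauX C ω -
    E.hatGamma Y1 Y0 Ecov ω ⬝ᵥ E.hatDeltaW Ecov ω

/-- The vector stratified difference-in-means estimator `τ̂_R`. -/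
def hatTauVec {d : ℕ} (R1 R0 : Fin E.N → Fin d → ℝ) (ω : E.Omega) : Fin d → ℝ := fun j =>
  ∑ k, E.Pi k * (E.mean1 (fun i => R1 i j) k ω - E.mean0 (fun i => R0 i j) k ω)
/-- The vector estimand `τ_R`. -/
def tauVec {d : ℕ} (R1 R0 : Fin E.N → Fin d → ℝ) : Fin d → ℝ := fun j =>
  ∑ k, E.Pi k * (E.meanK (fun i => R1 i j) k - E.meanK (fun i => R0 i j) k)
/-- The covariance matrix `V_R` of `√n (τ̂_R - τ_R)`. -/
def VRmat {d : ℕ} (R1 R0 : Fin E.N → Fin d → ℝ) : Matrix (Fin d) (Fin d) ℝ :=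
  Matrix.of fun j j' =>
    ∑ k, (E.Pi k) ^ 2 / E.pik k *
      (E.covK (fun i => R1 i j) (fun i => R1 i j') k / E.e1 k +
        E.covK (fun i => R0 i j) (fun i => R0 i j') k / E.e0 k -
        E.fk k * E.covK (fun i => R1 i j - R0 i j) (fun i => R1 i j' - R0 i j') k)

/-- The attainable sampling vectors. -/
def validZ : Finset (Fin E.N → Bool) :=
  Finset.univ.filter fun z => ∀ k, ((E.stratum k).filter fun i => z i = true).card = E.nk k
/-- Stratified random sampling without replacement: the uniform distribution over attainable
sampling vectors. -/
def Psamp : Measure (Fin E.N → Bool) := unif E.validZ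
/-- `δ̂_W` as a function of the sampling vector alone. -/
def deltaWz {J : ℕ} (W : Fin E.N → Fin J → ℝ) (z : Fin E.N → Bool) : Fin J → ℝ := fun j =>
  ∑ k, E.Pi k *
    ((∑ i ∈ E.stratum k, (if z i then (1 : ℝ) else 0) * W i j) / (E.nk k : ℝ) -
      E.meanK (fun i => W i j) k)

/-- The attainable treatment-assignment vectors given the sampling vector `z`. -/
def validT (z : Fin E.N → Bool) : Finset (Fin E.N → Bool) :=
  Finset.univ.filter fun t =>
    (∀ k, ((E.stratum k).filter fun i => z i = true ∧ t i = true).card = E.nk1 k) ∧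
    (∀ i, t i = true → z i = true)
/-- Stratified randomization of the sampled units, conditionally on the sampling vector `z`. -/
def Pgiven (z : Fin E.N → Bool) : Measure E.Omega :=
  unif ((E.validT z).image fun t => (z, t))

/-- `M_S` as a function of the sampling vector alone. -/
def MSz {J : ℕ} (W : Fin E.N → Fin J → ℝ) (z : Fin E.N → Bool) : ℝ := E.MS W (z, z)
/-- The acceptable sampling vectors. -/
def acceptZ {J : ℕ} (W : Fin E.N → Fin J → ℝ) (aS : ℝ) : Finset (Fin E.N → Bool) :=
  E.validZ.filter fun z => E.MSz W z ≤ aS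
/-- The acceptable assignment vectors given a sampling vector `z`. -/
def acceptT {J : ℕ} (X : Fin E.N → Fin J → ℝ) (aT : ℝ) (z : Fin E.N → Bool) :
    Finset (Fin E.N → Bool) := (E.validT z).filter fun t => E.MT X (z, t) ≤ aT
/-- The set `M` of jointly acceptable pairs. -/
def acceptedPairs {J1 J2 : ℕ} (W : Fin E.N → Fin J1 → ℝ) (X : Fin E.N → Fin J2 → ℝ)
    (aS aT : ℝ) : Finset E.Omega :=
  E.valid.filter fun ω => E.MS W ω ≤ aS ∧ E.MT X ω ≤ aT
/-- The single-stage rejective design: uniform over jointly acceptable pairs. -/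
def singleStage {J1 J2 : ℕ} (W : Fin E.N → Fin J1 → ℝ) (X : Fin E.N → Fin J2 → ℝ)
    (aS aT : ℝ) : Measure E.Omega := unif (E.acceptedPairs W X aS aT)
/-- The two-stage rejective design: first a uniform acceptable sampling, then a uniform
acceptable assignment given the sampling. -/
def twoStage {J1 J2 : ℕ} (W : Fin E.N → Fin J1 → ℝ) (X : Fin E.N → Fin J2 → ℝ) (aS aT : ℝ) :
    Measure E.Omega :=
  ((E.acceptZ W aS).card : ℝ≥0∞)⁻¹ • ∑ z ∈ E.acceptZ W aS,
    (((E.acceptT X aT z).card : ℝ≥0∞)⁻¹ • ∑ t ∈ E.acceptT X aT z, Measure.dirac (z, t))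
/-- The conditional acceptance probability `P(M_T ≤ a_T ∣ Z = z)`. -/
def condAcceptProb {J : ℕ} (X : Fin E.N → Fin J → ℝ) (aT : ℝ) (z : Fin E.N → Bool) : ℝ :=
  ((E.acceptT X aT z).card : ℝ) / ((E.validT z).card : ℝ)

end SRSE


private lemma sqrt_add_pos' {A B : ℝ} (hA : 0 ≤ A) (hB : 0 ≤ B) (hAB : 0 < A + B) :
    0 < Real.sqrt A + Real.sqrt B := by
  rcases lt_or_ge 0 A with h | h
  · have h1 := Real.sqrt_pos.mpr h
    have h2 := Real.sqrt_nonneg B; linarith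
  · have hB0 : 0 < B := by
      have : A = 0 := le_antisymm h hA
      linarith
    have h1 := Real.sqrt_pos.mpr hB0
    have h2 := Real.sqrt_nonneg A; linarith

private lemma key_ineq (A B e : ℝ) (hA : 0 ≤ A) (hB : 0 ≤ B) (hAB : 0 < A + B)
    (he0 : 0 < e) (he1 : e < 1) :
    (Real.sqrt A + Real.sqrt B) ^ 2 ≤ A / e + B / (1 - e) ∧
      (A / e + B / (1 - e) = (Real.sqrt A + Real.sqrt B) ^ 2 ↔
        e = Real.sqrt A / (Real.sqrt A + Real.sqrt B)) := by
  set a := Real.sqrt A with ha_def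
  set b := Real.sqrt B with hb_def
  have ha : a ^ 2 = A := Real.sq_sqrt hA
  have hb : b ^ 2 = B := Real.sq_sqrt hB
  have ha0 : 0 ≤ a := Real.sqrt_nonneg A
  have hb0 : 0 ≤ b := Real.sqrt_nonneg B
  have hab : 0 < a + b := sqrt_add_pos' hA hB hAB
  have hee : 0 < e * (1 - e) := by nlinarith
  have hene : e ≠ 0 := ne_of_gt he0
  have he1ne : (1 : ℝ) - e ≠ 0 := by linarith
  have hident : A / e + B / (1 - e) =
      (a + b) ^ 2 + ((1 - e) * a - e * b) ^ 2 / (e * (1 - e)) := by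
    rw [← ha, ← hb]
    field_simp
    ring
  have hsq : 0 ≤ ((1 - e) * a - e * b) ^ 2 / (e * (1 - e)) := by positivity
  constructor
  · rw [hident]; linarith
  · rw [hident]
    constructor
    · intro h
      have h2 : ((1 - e) * a - e * b) ^ 2 / (e * (1 - e)) = 0 := by linarith
      have h3 : ((1 - e) * a - e * b) ^ 2 = 0 := by
        rcases div_eq_zero_iff.mp h2 with h' | h'
        · exact h'
        · exact absurd h' (ne_of_gt hee)
      have h4 : (1 - e) * a - e * b = 0 := by
        exact (pow_eq_zero_iff two_ne_zero).mp h3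
      rw [eq_div_iff (ne_of_gt hab)]
      nlinarith
    · intro h
      have h4 : (1 - e) * a - e * b = 0 := by
        rw [h]; field_simp; ring
      rw [h4]
      simp

private lemma estar_val (A B : ℝ) (hA : 0 ≤ A) (hB : 0 ≤ B) (hAB : 0 < A + B) :
    A / (Real.sqrt A / (Real.sqrt A + Real.sqrt B)) +
      B / (1 - Real.sqrt A / (Real.sqrt A + Real.sqrt B)) =
      (Real.sqrt A + Real.sqrt B) ^ 2 := by
  set a := Real.sqrt A with ha_def
  set b := Real.sqrt B with hb_def
  have ha : a ^ 2 = A := Real.sq_sqrt hA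
  have hb : b ^ 2 = B := Real.sq_sqrt hB
  have ha0 : 0 ≤ a := Real.sqrt_nonneg A
  have hb0 : 0 ≤ b := Real.sqrt_nonneg B
  have hab : 0 < a + b := sqrt_add_pos' hA hB hAB
  have h1 : 1 - a / (a + b) = b / (a + b) := by
    field_simp; ring
  rw [h1, ← ha, ← hb]
  have t1 : a ^ 2 / (a / (a + b)) = a * (a + b) := by
    rcases eq_or_lt_of_le ha0 with h | h
    · simp [← h]
    · field_simp
  have t2 : b ^ 2 / (b / (a + b)) = b * (a + b) := by
    rcases eq_or_lt_of_le hb0 with h | h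
    · simp [← h]
    · field_simp
  rw [t1, t2]; ring

/-- Theorem 2(ii): the pointwise inequality
`S²1/e + S²0/(1-e) ≥ (√S²1 + √S²0)²` for `e ∈ (0,1)`, with equality iff
`e = √S²1/(√S²1 + √S²0)`; consequently, for given stratum sampling proportions, the
asymptotic variance `V_ττ` is minimized over treated proportions `(e_[k]1) ∈ (0,1)^K`
exactly at `e_[k]1 = √(S²_[k]1)/(√(S²_[k]1) + √(S²_[k]0))`. -/
theorem statement6 (K : ℕ) (Pi fk Stsq S1sq S0sq : Fin K → ℝ) (f : ℝ)
    (hPi : ∀ k, 0 < Pi k) (hfk : ∀ k, 0 < fk k) (hf : 0 < f)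
    (hS1 : ∀ k, 0 ≤ S1sq k) (hS0 : ∀ k, 0 ≤ S0sq k) (hpos : ∀ k, 0 < S1sq k + S0sq k) :
    (∀ A B e : ℝ, 0 ≤ A → 0 ≤ B → 0 < A + B → 0 < e → e < 1 →
      ((Real.sqrt A + Real.sqrt B) ^ 2 ≤ A / e + B / (1 - e) ∧
        (A / e + B / (1 - e) = (Real.sqrt A + Real.sqrt B) ^ 2 ↔
          e = Real.sqrt A / (Real.sqrt A + Real.sqrt B)))) ∧
    (let estar : Fin K → ℝ := fun k =>
        Real.sqrt (S1sq k) / (Real.sqrt (S1sq k) + Real.sqrt (S0sq k))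
     let V : (Fin K → ℝ) → ℝ := fun e =>
        (∑ k, f * Pi k / fk k * (S1sq k / e k + S0sq k / (1 - e k))) -
          f * ∑ k, Pi k * Stsq k
     ∀ e : Fin K → ℝ, (∀ k, 0 < e k ∧ e k < 1) →
        (V estar ≤ V e ∧ (V e = V estar ↔ e = estar))) := by
  constructor
  · intro A B e hA hB hAB he0 he1
    exact key_ineq A B e hA hB hAB he0 he1
  · intro estar V e he
    have hestar : ∀ k : Fin K, estar k =
        Real.sqrt (S1sq k) / (Real.sqrt (S1sq k) + Real.sqrt (S0sq k)) := fun _ => rfl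
    have hVe : ∀ e' : Fin K → ℝ, V e' =
        (∑ k, f * Pi k / fk k * (S1sq k / e' k + S0sq k / (1 - e' k))) -
          f * ∑ k, Pi k * Stsq k := fun _ => rfl
    have hek : ∀ k, 0 < e k := fun k => (he k).1
    have hek1 : ∀ k, e k < 1 := fun k => (he k).2
    have hck : ∀ k : Fin K, 0 < f * Pi k / fk k := fun k => by
      have h1 := hPi k; have h2 := hfk k; positivity
    have hstar : ∀ k : Fin K, S1sq k / estar k + S0sq k / (1 - estar k) =
        (Real.sqrt (S1sq k) + Real.sqrt (S0sq k)) ^ 2 := fun k => by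
      rw [hestar k]; exact estar_val _ _ (hS1 k) (hS0 k) (hpos k)
    have hge : ∀ k : Fin K,
        (Real.sqrt (S1sq k) + Real.sqrt (S0sq k)) ^ 2 ≤
          S1sq k / e k + S0sq k / (1 - e k) :=
      fun k => (key_ineq _ _ _ (hS1 k) (hS0 k) (hpos k) (hek k) (hek1 k)).1
    have hVdiff : V e - V estar = ∑ k, f * Pi k / fk k *
        ((S1sq k / e k + S0sq k / (1 - e k)) -
          (Real.sqrt (S1sq k) + Real.sqrt (S0sq k)) ^ 2) := by
      rw [hVe, hVe]
      have : ∀ k : Fin K, f * Pi k / fk k *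
          ((S1sq k / e k + S0sq k / (1 - e k)) -
            (Real.sqrt (S1sq k) + Real.sqrt (S0sq k)) ^ 2) =
          f * Pi k / fk k * (S1sq k / e k + S0sq k / (1 - e k)) -
          f * Pi k / fk k * (S1sq k / estar k + S0sq k / (1 - estar k)) := fun k => by
        rw [hstar k]; ring
      rw [Finset.sum_congr rfl fun k _ => this k, Finset.sum_sub_distrib]
      ring
    have hnn : ∀ k ∈ Finset.univ, (0:ℝ) ≤ f * Pi k / fk k *
        ((S1sq k / e k + S0sq k / (1 - e k)) -
          (Real.sqrt (S1sq k) + Real.sqrt (S0sq k)) ^ 2) := fun k _ =>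
      mul_nonneg (hck k).le (by linarith [hge k])
    constructor
    · have h0 : 0 ≤ V e - V estar := by
        rw [hVdiff]; exact Finset.sum_nonneg hnn
      linarith
    · rw [← sub_eq_zero, hVdiff, Finset.sum_eq_zero_iff_of_nonneg hnn]
      constructor
      · intro h
        funext k
        have hk := h k (Finset.mem_univ k)
        have hd : (S1sq k / e k + S0sq k / (1 - e k)) -
            (Real.sqrt (S1sq k) + Real.sqrt (S0sq k)) ^ 2 = 0 := by
          rcases mul_eq_zero.mp hk with h' | h'
          · exact absurd h' (ne_of_gt (hck k))
          · exact h'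
        have heq := (key_ineq _ _ _ (hS1 k) (hS0 k) (hpos k) (hek k) (hek1 k)).2.mp
          (by linarith)
        rw [hestar k]; exact heq
      · intro h k _
        subst h
        rw [hstar k]
        simp
end SurveyExperiments
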